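/- arXiv:1712.02895 — 3 statements merged into one kernel-verified Lean document; each statement's English description precedes it below -/
import Mathlib

section
/- For all real x with 0 < x < 1, the function f(x) = (1 - x(1 - x/2))^{1/x} is strictly increasing in x. -/
open Real

private lemma q_pos (x : ℝ) : 0 < 1 - x + x ^ 2 / 2 := by nlinarith [sq_nonneg (x - 1)]

private noncomputable def phi (x : ℝ) : ℝ :=
  x ^ 2 - x - (1 - x + x ^ 2 / 2) * Real.log (1 - x + x ^ 2 / 2)

private lemma hasDerivAt_q (x : ℝ) :
    HasDerivAt (fun y : ℝ => 1 - y + y ^ 2 / 2) (x - 1) x := by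
  have h : HasDerivAt (fun y : ℝ => 1 - y + y ^ 2 / 2)
      (0 - 1 + (↑2 * x ^ (2 - 1)) / 2) x :=
    (((hasDerivAt_const x (1:ℝ)).sub (hasDerivAt_id x)).add
      ((hasDerivAt_pow 2 x).div_const 2))
  convert h using 1; push_cast; ring

private lemma hasDerivAt_logq (x : ℝ) :
    HasDerivAt (fun y : ℝ => Real.log (1 - y + y ^ 2 / 2)) ((x - 1) / (1 - x + x ^ 2 / 2)) x :=
  (hasDerivAt_q x).log (q_pos x).ne'

private lemma hasDerivAt_phi (x : ℝ) :
    HasDerivAt phi (x + (1 - x) * Real.log (1 - x + x ^ 2 / 2)) x := by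
  have hq := q_pos x
  have h1 : HasDerivAt (fun y : ℝ => y ^ 2 - y) (↑2 * x ^ (2 - 1) - 1) x :=
    (hasDerivAt_pow 2 x).sub (hasDerivAt_id x)
  have h2 := (hasDerivAt_q x).mul (hasDerivAt_logq x)
  have h := h1.sub h2
  refine h.congr_deriv ?_
  rw [mul_div_cancel₀ _ hq.ne']
  set L := Real.log (1 - x + x ^ 2 / 2)
  push_cast
  ring

private lemma phi_pos {x : ℝ} (hx : x ∈ Set.Ioo (0:ℝ) 1) : 0 < phi x := by
  have mono : StrictMonoOn phi (Set.Ico 0 1) := by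
    apply strictMonoOn_of_deriv_pos (convex_Ico 0 1)
    · exact fun y _ => (hasDerivAt_phi y).continuousAt.continuousWithinAt
    · intro y hy
      rw [interior_Ico] at hy
      rw [(hasDerivAt_phi y).deriv]
      have hq := q_pos y
      have hlog : 1 - (1 - y + y ^ 2 / 2)⁻¹ ≤ Real.log (1 - y + y ^ 2 / 2) :=
        Real.one_sub_inv_le_log_of_pos hq
      have hql : (1 - y + y ^ 2 / 2) - 1 ≤
          (1 - y + y ^ 2 / 2) * Real.log (1 - y + y ^ 2 / 2) := by
        have := mul_le_mul_of_nonneg_left hlog hq.le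
        rw [mul_sub, mul_one, mul_inv_cancel₀ hq.ne'] at this
        linarith
      have h1y : (0:ℝ) ≤ 1 - y := by linarith [hy.2]
      nlinarith [mul_le_mul_of_nonneg_left hql h1y, hy.1, hy.2, hq]
  have h0 : phi 0 = 0 := by simp [phi]
  have := mono (by constructor <;> norm_num) ⟨hx.1.le, hx.2⟩ hx.1
  rwa [h0] at this

private lemma g_strictMono :
    StrictMonoOn (fun y : ℝ => Real.log (1 - y + y ^ 2 / 2) / y) (Set.Ioo 0 1) := by
  have key : ∀ x ∈ Set.Ioo (0:ℝ) 1,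
      HasDerivAt (fun y : ℝ => Real.log (1 - y + y ^ 2 / 2) / y)
        (phi x / ((1 - x + x ^ 2 / 2) * x ^ 2)) x := by
    intro x hx
    have hq := q_pos x
    have h := (hasDerivAt_logq x).div (hasDerivAt_id x) hx.1.ne'
    refine h.congr_deriv ?_
    simp only [id_eq, mul_one]
    set L := Real.log (1 - x + x ^ 2 / 2) with hLdef
    have e1 : (x - 1) / (1 - x + x ^ 2 / 2) * x - L =
        ((x - 1) * x - (1 - x + x ^ 2 / 2) * L) / (1 - x + x ^ 2 / 2) := by
      rw [div_mul_eq_mul_div, div_sub' hq.ne']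
    rw [e1, div_div]
    congr 1
    simp only [phi]
    ring
  apply strictMonoOn_of_deriv_pos (convex_Ioo 0 1)
  · exact fun y hy => (key y hy).continuousAt.continuousWithinAt
  · intro y hy
    rw [interior_Ioo] at hy
    rw [(key y hy).deriv]
    exact div_pos (phi_pos hy) (mul_pos (q_pos y) (pow_pos hy.1 2))

/-- The function `f(x) = (1 - x(1 - x/2))^(1/x)` is strictly increasing on `(0,1)`. -/
theorem f_strictMonoOn :
    StrictMonoOn (fun x : ℝ => (1 - x * (1 - x / 2)) ^ (1 / x)) (Set.Ioo 0 1) := by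
  have hrw : ∀ x ∈ Set.Ioo (0:ℝ) 1,
      (1 - x * (1 - x / 2)) ^ (1 / x) = Real.exp (Real.log (1 - x + x ^ 2 / 2) / x) := by
    intro x hx
    have hq : (0:ℝ) < 1 - x * (1 - x / 2) := by nlinarith [q_pos x]
    rw [Real.rpow_def_of_pos hq]
    congr 1
    rw [show 1 - x * (1 - x / 2) = 1 - x + x ^ 2 / 2 by ring]
    rw [mul_one_div]
  intro a ha b hb hab
  simp only
  rw [hrw a ha, hrw b hb]
  exact Real.exp_lt_exp.2 (g_strictMono ha hb hab)
end

section
/- For any positive integers k ≤ m, repetition number r ≥ 1, and δ ∈ (0,1] with mδ an integer, writing mδ/k = ⌊mδ/k⌋ + t/k with integer remainder t, the interpolation protocol worst-case error probability under p_k = k/m, namely [1 - (k/m)(1 - (k-1)/(2m))]^{⌊mδ/k⌋ r} · [1 - (t/m)(1 - (t-1)/(2m))]^r, is at most 2^{-δr}. -/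
lemma two_rpow_le_one_add (x : ℝ) (h0 : 0 ≤ x) (h1 : x ≤ 1) : (2:ℝ) ^ x ≤ 1 + x := by
  have h := convexOn_exp.2 (Set.mem_univ (0:ℝ)) (Set.mem_univ (Real.log 2))
    (by linarith : (0:ℝ) ≤ 1 - x) h0 (by ring)
  simp only [smul_eq_mul, mul_zero, zero_add, Real.exp_zero, Real.exp_log two_pos] at h
  rw [Real.rpow_def_of_pos two_pos]
  calc Real.exp (Real.log 2 * x) = Real.exp (x * Real.log 2) := by ring_nf
    _ ≤ (1 - x) * 1 + x * 2 := h
    _ = 1 + x := by ring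

lemma key (m j : ℕ) (hm : 1 ≤ m) (hj : j ≤ m) :
    1 - ((j:ℝ)/m) * (1 - ((j:ℝ)-1)/(2*m)) ≤ (2:ℝ) ^ (-((j:ℝ)/m)) := by
  have hm' : (0:ℝ) < m := by exact_mod_cast hm
  have hj' : (j:ℝ) ≤ m := by exact_mod_cast hj
  have hj0 : (0:ℝ) ≤ j := Nat.cast_nonneg j
  set x : ℝ := (j:ℝ)/m with hx
  have hx0 : 0 ≤ x := div_nonneg hj0 hm'.le
  have hx1 : x ≤ 1 := (div_le_one hm').mpr hj'
  have e1 : 1 - ((j:ℝ)/m) * (1 - ((j:ℝ)-1)/(2*m)) = 1 - (j:ℝ)/m + ((j:ℝ)*((j:ℝ)-1))/(2*m^2) := by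
    field_simp
    ring
  have e2 : x^2/2 = (j:ℝ)^2/(2*m^2) := by
    rw [hx, div_pow]; ring
  have h3 : ((j:ℝ)*((j:ℝ)-1))/(2*m^2) ≤ (j:ℝ)^2/(2*m^2) :=
    (div_le_div_iff_of_pos_right (by positivity)).mpr (by nlinarith)
  have step1 : 1 - ((j:ℝ)/m) * (1 - ((j:ℝ)-1)/(2*m)) ≤ 1 - x + x^2/2 := by
    rw [e1, e2, hx]; linarith
  have step2 : 1 - x + x^2/2 ≤ (1+x)⁻¹ := by
    rw [inv_eq_one_div, le_div_iff₀ (by linarith)]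
    nlinarith [mul_nonneg (sq_nonneg x) (by linarith : (0:ℝ) ≤ 1 - x)]
  have step3 : (1+x)⁻¹ ≤ (2:ℝ) ^ (-x) := by
    rw [Real.rpow_neg (by norm_num)]
    exact inv_anti₀ (Real.rpow_pos_of_pos two_pos x) (two_rpow_le_one_add x hx0 hx1)
  linarith


/-- Worst-case error probability of the interpolation protocol with block size `k`,
repetition number `r`, and `p_k = k/m` is at most `2^{-δ r}`.  Here `D = mδ ∈ ℕ`,
`⌊mδ/k⌋ = D / k` and remainder `t = D % k`. -/
theorem interpolation_error_bound (m k r : ℕ) (hk : 1 ≤ k) (hkm : k ≤ m) (hr : 1 ≤ r)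
    (δ : ℝ) (hδ0 : 0 < δ) (hδ1 : δ ≤ 1) (D : ℕ) (hD : (D : ℝ) = (m : ℝ) * δ) :
    (1 - ((k : ℝ) / m) * (1 - ((k : ℝ) - 1) / (2 * m))) ^ ((D / k) * r) *
        (1 - (((D % k : ℕ) : ℝ) / m) * (1 - (((D % k : ℕ) : ℝ) - 1) / (2 * m))) ^ r
      ≤ (2 : ℝ) ^ (-(δ * r)) := by

  have hm : 1 ≤ m := le_trans hk hkm
  have hm' : (0:ℝ) < m := by exact_mod_cast hm
  have htk : D % k ≤ m := le_trans (Nat.mod_lt D (by omega)).le hkm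
  have hk' : (0:ℝ) < k := by exact_mod_cast hk
  -- nonnegativity of the bases
  have hA0 : 0 ≤ 1 - ((k : ℝ) / m) * (1 - ((k : ℝ) - 1) / (2 * m)) := by
    have h1 : (k:ℝ)/m ≤ 1 := (div_le_one hm').mpr (by exact_mod_cast hkm)
    have hk1 : (1:ℝ) ≤ k := by exact_mod_cast hk
    have h2 : ((k:ℝ)-1)/(2*m) ≥ 0 := div_nonneg (by linarith) (by linarith)
    nlinarith [div_nonneg (Nat.cast_nonneg k : (0:ℝ) ≤ k) hm'.le]
  have hB0 : 0 ≤ 1 - (((D % k : ℕ) : ℝ) / m) * (1 - (((D % k : ℕ) : ℝ) - 1) / (2 * m)) := by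
    set t : ℕ := D % k
    have h1 : (t:ℝ)/m ≤ 1 := (div_le_one hm').mpr (by exact_mod_cast htk)
    have h1' : (0:ℝ) ≤ (t:ℝ)/m := div_nonneg (Nat.cast_nonneg t) hm'.le
    rcases Nat.eq_zero_or_pos t with h | h
    · simp [h]
    · have : (1:ℝ) ≤ t := by exact_mod_cast h
      have h2 : ((t:ℝ)-1)/(2*m) ≥ 0 := by apply div_nonneg <;> linarith
      nlinarith
  have hA := key m k hm hkm
  have hB := key m (D % k) hm htk
  calc (1 - ((k : ℝ) / m) * (1 - ((k : ℝ) - 1) / (2 * m))) ^ ((D / k) * r) *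
        (1 - (((D % k : ℕ) : ℝ) / m) * (1 - (((D % k : ℕ) : ℝ) - 1) / (2 * m))) ^ r
      ≤ ((2:ℝ) ^ (-((k:ℝ)/m))) ^ ((D / k) * r) * ((2:ℝ) ^ (-(((D % k : ℕ):ℝ)/m))) ^ r := by
        apply mul_le_mul (pow_le_pow_left₀ hA0 hA _) (pow_le_pow_left₀ hB0 hB _)
          (pow_nonneg hB0 _) (pow_nonneg (Real.rpow_nonneg (by norm_num) _) _)
    _ = (2:ℝ) ^ ((-((k:ℝ)/m)) * ((D / k) * r : ℕ) + (-(((D % k : ℕ):ℝ)/m)) * (r:ℕ)) := by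
        rw [← Real.rpow_natCast ((2:ℝ) ^ (-((k:ℝ)/m))) _, ← Real.rpow_natCast ((2:ℝ) ^ (-(((D % k : ℕ):ℝ)/m))) _,
          ← Real.rpow_mul (by norm_num), ← Real.rpow_mul (by norm_num), ← Real.rpow_add (by norm_num)]
    _ = (2:ℝ) ^ (-(δ * r)) := by
        congr 1
        have hdm : (k:ℝ) * ((D / k : ℕ):ℝ) + ((D % k : ℕ):ℝ) = (D:ℝ) := by
          exact_mod_cast Nat.div_add_mod D k
        have hδ : δ = (D:ℝ)/m := by field_simp [hD]; linarith [hD]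
        push_cast
        rw [hδ]
        field_simp
        linear_combination (-1:ℝ) * hdm
end

section
/- Let |ψ_x⟩ and |ψ_y⟩ be unit vectors in a Hilbert space and let Π be the orthogonal projection onto a subspace containing both |ψ_x⟩⊗|ψ_x⟩ and |ψ_y⟩⊗|ψ_y⟩. Then ⟨ψ_x ψ_y| Π |ψ_x ψ_y⟩ ≥ 2|⟨ψ_x|ψ_y⟩|²/(1 + |⟨ψ_x|ψ_y⟩|²) ≥ |⟨ψ_x|ψ_y⟩|². -/
open scoped InnerProductSpace

/-- If `Π` is an orthogonal projection (self-adjoint idempotent) fixing both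
`|ψ_x ψ_x⟩` and `|ψ_y ψ_y⟩` (tensor products encoded by a bilinear map `t`
satisfying `⟪t a b, t c d⟫ = ⟪a,c⟫⟪b,d⟫`), then
`⟨ψ_x ψ_y|Π|ψ_x ψ_y⟩ ≥ 2|⟨ψ_x|ψ_y⟩|²/(1+|⟨ψ_x|ψ_y⟩|²) ≥ |⟨ψ_x|ψ_y⟩|²`. -/
theorem projection_overlap_lower_bound
    {H H2 : Type*} [NormedAddCommGroup H] [InnerProductSpace ℂ H]
    [NormedAddCommGroup H2] [InnerProductSpace ℂ H2]
    (t : H →ₗ[ℂ] H →ₗ[ℂ] H2)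
    (ht : ∀ a b c d : H, ⟪t a b, t c d⟫_ℂ = ⟪a, c⟫_ℂ * ⟪b, d⟫_ℂ)
    (ψx ψy : H) (hx : ‖ψx‖ = 1) (hy : ‖ψy‖ = 1)
    (P : H2 →ₗ[ℂ] H2)
    (hsa : ∀ u v : H2, ⟪P u, v⟫_ℂ = ⟪u, P v⟫_ℂ)
    (hidem : P ∘ₗ P = P)
    (hxx : P (t ψx ψx) = t ψx ψx)
    (hyy : P (t ψy ψy) = t ψy ψy) :
    ‖⟪ψx, ψy⟫_ℂ‖ ^ 2 ≤
        2 * ‖⟪ψx, ψy⟫_ℂ‖ ^ 2 / (1 + ‖⟪ψx, ψy⟫_ℂ‖ ^ 2) ∧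
      2 * ‖⟪ψx, ψy⟫_ℂ‖ ^ 2 / (1 + ‖⟪ψx, ψy⟫_ℂ‖ ^ 2) ≤
        (⟪t ψx ψy, P (t ψx ψy)⟫_ℂ).re := by
  set c : ℂ := ⟪ψx, ψy⟫_ℂ with hc
  set r : ℝ := ‖c‖ with hr
  have hr0 : 0 ≤ r := norm_nonneg c
  have hr1 : r ≤ 1 := by
    have h := norm_inner_le_norm (𝕜 := ℂ) ψx ψy
    simpa [hx, hy, hr, hc] using h
  have hd : (0:ℝ) < 1 + r ^ 2 := by positivity
  set φ : H2 := t ψx ψy with hφ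
  have hPP : ∀ z : H2, P (P z) = P z := fun z => LinearMap.ext_iff.mp hidem z |>.symm ▸ rfl
  have hPre : (⟪φ, P φ⟫_ℂ).re = ‖P φ‖ ^ 2 := by
    have h1 : ⟪φ, P φ⟫_ℂ = ⟪P φ, P φ⟫_ℂ := by
      conv_lhs => rw [← hPP φ]
      exact (hsa φ (P φ)).symm
    rw [h1, inner_self_eq_norm_sq_to_K]
    norm_cast
  -- first inequality
  refine ⟨by
    rw [le_div_iff₀ hd]
    nlinarith [mul_nonneg (by nlinarith : (0:ℝ) ≤ 1 - r ^ 2) (sq_nonneg r)], ?_⟩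
  -- second inequality
  rw [hPre]
  by_cases hc0 : c = 0
  · have : r = 0 := by simp [hr, hc0]
    rw [this]
    norm_num
  · have hcconj : (starRingEnd ℂ) c ≠ 0 := by simpa using hc0
    set μ : ℂ := (starRingEnd ℂ) c / c with hμ
    set w : H2 := t ψx ψx + μ • t ψy ψy with hw
    have hxx1 : ⟪ψx, ψx⟫_ℂ = 1 := by
      rw [inner_self_eq_norm_sq_to_K, hx]; norm_num
    have hyy1 : ⟪ψy, ψy⟫_ℂ = 1 := by
      rw [inner_self_eq_norm_sq_to_K, hy]; norm_num
    have hyx : ⟪ψy, ψx⟫_ℂ = (starRingEnd ℂ) c := by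
      rw [hc, ← inner_conj_symm]
    have hPw : P w = w := by
      simp [hw, map_add, map_smul, hxx, hyy]
    have hcc : c * (starRingEnd ℂ) c = (r : ℂ) ^ 2 := by
      rw [Complex.mul_conj, hr, Complex.normSq_eq_norm_sq]
      push_cast; ring
    have hwφ : ⟪w, φ⟫_ℂ = 2 * c := by
      rw [hw, hφ, inner_add_left, inner_smul_left, ht, ht, hxx1, hyy1, hyx, hμ]
      rw [map_div₀]
      simp only [Complex.conj_conj]
      field_simp
      ring
    have hww : ⟪w, w⟫_ℂ = 2 + 2 * (r : ℂ) ^ 2 := by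
      rw [hw, inner_add_left, inner_add_right, inner_add_right,
        inner_smul_left, inner_smul_right, inner_smul_right, inner_smul_left,
        ht, ht, ht, ht, hxx1, hyy1, hyx, hc]
      rw [hμ, map_div₀]
      simp only [Complex.conj_conj]
      field_simp
      linear_combination (2 * c * (starRingEnd ℂ) c) * hcc
    have hnw : ‖w‖ ^ 2 = 2 + 2 * r ^ 2 := by
      have h := inner_self_eq_norm_sq_to_K (𝕜 := ℂ) w
      rw [hww] at h
      have h2 := congrArg Complex.re h.symm
      simpa [← Complex.ofReal_pow] using h2
    have hCS : ‖⟪w, P φ⟫_ℂ‖ ≤ ‖w‖ * ‖P φ‖ := norm_inner_le_norm w (P φ)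
    have hwPφ : ⟪w, P φ⟫_ℂ = 2 * c := by
      rw [← hsa, hPw, hwφ]
    rw [hwPφ] at hCS
    have h2c : ‖(2 : ℂ) * c‖ = 2 * r := by
      simp [hr, map_mul]
    rw [h2c] at hCS
    have hnw0 : 0 ≤ ‖w‖ := norm_nonneg w
    have hnp0 : 0 ≤ ‖P φ‖ := norm_nonneg _
    have hsq : 4 * r ^ 2 ≤ (2 + 2 * r ^ 2) * ‖P φ‖ ^ 2 := by
      nlinarith [hCS, hnw, mul_self_nonneg (‖w‖ * ‖P φ‖)]
    rw [div_le_iff₀ hd]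
    nlinarith
end
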